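/- Let A be a real n×n matrix, B a real n×d matrix, M, N real symmetric matrices of sizes n×n and d×d, and H_j a real symmetric n×n matrix satisfying H_j = (A − BK_j)ᵀ H_j (A − BK_j) + M + K_jᵀ N K_j for some K_j ∈ ℝ^{d×n}. Define the (n+d)×(n+d) matrix G_j = [A B]ᵀ H_j [A B] + diag(M, N), and for any K ∈ ℝ^{d×n} and x ∈ ℝⁿ define X_K(x) = [I; −K] x xᵀ [I, −Kᵀ] ∈ ℝ^{(n+d)×(n+d)}. Let Ĝ_j be a real symmetric (n+d)×(n+d) matrix such that every entry of G_j − Ĝ_j has absolute value at most ε, and let K_{j+1} ∈ ℝ^{d×n} satisfy tr(Ĝ_j X_{K_{j+1}}(x)) ≤ tr(Ĝ_j X_{K_j}(x)) for all x ∈ ℝⁿ. Then for all x ∈ ℝⁿ: xᵀ(A − BK_{j+1})ᵀ H_j (A − BK_{j+1}) x + xᵀ(M + K_{j+1}ᵀ N K_{j+1}) x ≤ xᵀ H_j x + ε·𝟙ᵀ(|X_{K_j}(x)| + |X_{K_{j+1}}(x)|)𝟙, where |X| denotes the entrywise absolute value of a matrix and 𝟙 the all-ones vector in ℝ^{n+d}.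 -/

import Mathlib

open Matrix

/-- Spectral norm: operator norm induced by the Euclidean norm. -/
noncomputable def specNorm {m n : ℕ} (A : Matrix (Fin m) (Fin n) ℝ) : ℝ :=
  ‖LinearMap.toContinuousLinearMap (Matrix.toEuclideanLin A)‖

/-- Frobenius norm: square root of the sum of squares of the entries. -/
noncomputable def frobNorm {m n : ℕ} (A : Matrix (Fin m) (Fin n) ℝ) : ℝ :=
  Real.sqrt (∑ i, ∑ j, A i j ^ 2)

private lemma trace_mul_vecMulVec {κ : Type*} [Fintype κ] (W : Matrix κ κ ℝ) (x : κ → ℝ) :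
    (W * Matrix.vecMulVec x x).trace = x ⬝ᵥ W *ᵥ x := by
  simp only [Matrix.trace, Matrix.diag, Matrix.mul_apply, Matrix.vecMulVec_apply,
    dotProduct, Matrix.mulVec, Finset.mul_sum]
  exact Finset.sum_congr rfl fun i _ => Finset.sum_congr rfl fun j _ => by ring

private lemma trace_sandwich {ι κ : Type*} [Fintype ι] [Fintype κ]
    (G : Matrix ι ι ℝ) (F : Matrix ι κ ℝ) (x : κ → ℝ) :
    (G * (F * Matrix.vecMulVec x x * Fᵀ)).trace = x ⬝ᵥ (Fᵀ * G * F) *ᵥ x := by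
  rw [show G * (F * Matrix.vecMulVec x x * Fᵀ) = (G * F * Matrix.vecMulVec x x) * Fᵀ by
      simp only [Matrix.mul_assoc],
    Matrix.trace_mul_comm, show Fᵀ * (G * F * Matrix.vecMulVec x x)
      = (Fᵀ * G * F) * Matrix.vecMulVec x x by simp only [Matrix.mul_assoc],
    trace_mul_vecMulVec]

private lemma trace_err {ι : Type*} [Fintype ι] (E X : Matrix ι ι ℝ) (ε : ℝ)
    (h : ∀ i j, |E i j| ≤ ε) :
    (E * X).trace ≤ ε * ∑ i, ∑ j, |X i j| := by
  simp only [Matrix.trace, Matrix.diag, Matrix.mul_apply]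
  calc ∑ i, ∑ j, E i j * X j i ≤ ∑ i, ∑ j, ε * |X j i| := by
        apply Finset.sum_le_sum; intro i _
        apply Finset.sum_le_sum; intro j _
        calc E i j * X j i ≤ |E i j * X j i| := le_abs_self _
          _ = |E i j| * |X j i| := abs_mul _ _
          _ ≤ ε * |X j i| := mul_le_mul_of_nonneg_right (h i j) (abs_nonneg _)
    _ = ε * ∑ i, ∑ j, |X i j| := by
        rw [Finset.sum_comm, Finset.mul_sum]
        exact Finset.sum_congr rfl fun i _ => (Finset.mul_sum _ _ _).symm

/-- Approximate Lyapunov decrease for the FTL policy update in LQ control: if `Hj` is the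
value matrix of policy `Kj`, `Gj` the corresponding state-action value matrix, `Ghat` an
entrywise `ε`-accurate estimate of `Gj`, and `Kj1` satisfies
`tr(Ghat · X_{Kj1}(x)) ≤ tr(Ghat · X_{Kj}(x))` for all `x`, then for all `x`:
`xᵀ(A-B·Kj1)ᵀ Hj (A-B·Kj1) x + xᵀ(M + Kj1ᵀ N Kj1) x ≤ xᵀ Hj x + ε·𝟙ᵀ(|X_{Kj}(x)|+|X_{Kj1}(x)|)𝟙`. -/
theorem stmt11 {n d : ℕ}
    (A : Matrix (Fin n) (Fin n) ℝ) (B : Matrix (Fin n) (Fin d) ℝ)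
    (M : Matrix (Fin n) (Fin n) ℝ) (N : Matrix (Fin d) (Fin d) ℝ)
    (hM : M.IsHermitian) (hN : N.IsHermitian)
    (Hj : Matrix (Fin n) (Fin n) ℝ) (hHjsym : Hj.IsHermitian)
    (Kj Kj1 : Matrix (Fin d) (Fin n) ℝ)
    (hbell : Hj = (A - B * Kj)ᵀ * Hj * (A - B * Kj) + M + Kjᵀ * N * Kj)
    (Gj : Matrix (Fin n ⊕ Fin d) (Fin n ⊕ Fin d) ℝ)
    (hGj : Gj = (Matrix.fromCols A B)ᵀ * Hj * Matrix.fromCols A B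
                  + Matrix.fromBlocks M 0 0 N)
    (Ghat : Matrix (Fin n ⊕ Fin d) (Fin n ⊕ Fin d) ℝ) (hGhat : Ghat.IsHermitian)
    (ε : ℝ) (herr : ∀ i j, |(Gj - Ghat) i j| ≤ ε)
    (XK : Matrix (Fin d) (Fin n) ℝ → (Fin n → ℝ) →
      Matrix (Fin n ⊕ Fin d) (Fin n ⊕ Fin d) ℝ)
    (hXK : ∀ K x, XK K x =
      Matrix.fromRows 1 (-K) * Matrix.vecMulVec x x * (Matrix.fromRows 1 (-K))ᵀ)
    (hopt : ∀ x : Fin n → ℝ, (Ghat * XK Kj1 x).trace ≤ (Ghat * XK Kj x).trace) :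
    ∀ x : Fin n → ℝ,
      x ⬝ᵥ ((A - B * Kj1)ᵀ * Hj * (A - B * Kj1)) *ᵥ x
          + x ⬝ᵥ (M + Kj1ᵀ * N * Kj1) *ᵥ x
        ≤ x ⬝ᵥ Hj *ᵥ x + ε * ∑ i, ∑ j, (|XK Kj x i j| + |XK Kj1 x i j|) := by
  intro x
  -- key identity: Fᵀ Gj F = (A - BK)ᵀ Hj (A - BK) + (M + Kᵀ N K)
  have hFGF : ∀ K : Matrix (Fin d) (Fin n) ℝ,
      ((Matrix.fromRows (1 : Matrix (Fin n) (Fin n) ℝ) (-K))ᵀ * Gj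
        * Matrix.fromRows (1 : Matrix (Fin n) (Fin n) ℝ) (-K) : Matrix (Fin n) (Fin n) ℝ)
        = (A - B * K)ᵀ * Hj * (A - B * K) + (M + Kᵀ * N * K) := by
    intro K
    have h1 : Matrix.fromCols A B * Matrix.fromRows (1 : Matrix (Fin n) (Fin n) ℝ) (-K) = A - B * K := by
      rw [Matrix.fromCols_mul_fromRows]
      simp [sub_eq_add_neg]
    rw [hGj]
    rw [Matrix.mul_add, Matrix.add_mul]
    congr 1
    · rw [show (Matrix.fromRows (1 : Matrix (Fin n) (Fin n) ℝ) (-K))ᵀ * ((Matrix.fromCols A B)ᵀ * Hj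
            * Matrix.fromCols A B) * Matrix.fromRows (1 : Matrix (Fin n) (Fin n) ℝ) (-K)
          = (Matrix.fromCols A B * Matrix.fromRows (1 : Matrix (Fin n) (Fin n) ℝ) (-K))ᵀ * Hj
            * (Matrix.fromCols A B * Matrix.fromRows (1 : Matrix (Fin n) (Fin n) ℝ) (-K)) by
          rw [Matrix.transpose_mul]; simp only [Matrix.mul_assoc], h1]
    · rw [Matrix.mul_assoc, Matrix.fromBlocks_mul_fromRows, Matrix.transpose_fromRows,
        Matrix.fromCols_mul_fromRows]
      simp only [Matrix.mul_one, Matrix.mul_neg, Matrix.neg_mul, Matrix.mul_zero,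
        Matrix.zero_mul, add_zero, zero_add, neg_zero, Matrix.transpose_one, Matrix.transpose_neg,
        Matrix.one_mul, neg_neg]
      rw [Matrix.mul_assoc]
  have htr : ∀ K : Matrix (Fin d) (Fin n) ℝ,
      (Gj * XK K x).trace
        = x ⬝ᵥ ((A - B * K)ᵀ * Hj * (A - B * K)) *ᵥ x + x ⬝ᵥ (M + Kᵀ * N * K) *ᵥ x := by
    intro K
    rw [hXK, trace_sandwich, hFGF, Matrix.add_mulVec, dotProduct_add]
  -- Bellman: x Hj x = tr (Gj * XK Kj x)
  have hbell' : (Gj * XK Kj x).trace = x ⬝ᵥ Hj *ᵥ x := by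
    rw [htr Kj]
    conv_rhs => rw [hbell]
    simp [Matrix.add_mulVec, dotProduct_add, add_assoc]
  have e1 : ((Gj - Ghat) * XK Kj1 x).trace ≤ ε * ∑ i, ∑ j, |XK Kj1 x i j| :=
    trace_err _ _ _ herr
  have e2 : ((Ghat - Gj) * XK Kj x).trace ≤ ε * ∑ i, ∑ j, |XK Kj x i j| := by
    apply trace_err
    intro i j
    have := herr i j
    simpa [abs_sub_comm] using this
  have key : (Gj * XK Kj1 x).trace
      ≤ (Gj * XK Kj x).trace + ε * ∑ i, ∑ j, |XK Kj x i j|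
        + ε * ∑ i, ∑ j, |XK Kj1 x i j| := by
    have h1 : (Gj * XK Kj1 x).trace
        = (Ghat * XK Kj1 x).trace + ((Gj - Ghat) * XK Kj1 x).trace := by
      rw [← Matrix.trace_add, ← Matrix.add_mul,
        show Ghat + (Gj - Ghat) = Gj by abel]
    have h2 : (Ghat * XK Kj x).trace
        = (Gj * XK Kj x).trace + ((Ghat - Gj) * XK Kj x).trace := by
      rw [← Matrix.trace_add, ← Matrix.add_mul,
        show Gj + (Ghat - Gj) = Ghat by abel]
    calc (Gj * XK Kj1 x).trace
        = (Ghat * XK Kj1 x).trace + ((Gj - Ghat) * XK Kj1 x).trace := h1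
      _ ≤ (Ghat * XK Kj x).trace + ε * ∑ i, ∑ j, |XK Kj1 x i j| :=
          add_le_add (hopt x) e1
      _ = (Gj * XK Kj x).trace + ((Ghat - Gj) * XK Kj x).trace
            + ε * ∑ i, ∑ j, |XK Kj1 x i j| := by rw [h2]
      _ ≤ (Gj * XK Kj x).trace + ε * ∑ i, ∑ j, |XK Kj x i j|
            + ε * ∑ i, ∑ j, |XK Kj1 x i j| := by
          apply add_le_add_left; exact add_le_add_right e2 _
  rw [← htr Kj1]
  have hsum : ε * ∑ i, ∑ j, (|XK Kj x i j| + |XK Kj1 x i j|)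
      = ε * ∑ i, ∑ j, |XK Kj x i j| + ε * ∑ i, ∑ j, |XK Kj1 x i j| := by
    rw [← mul_add]
    congr 1
    rw [← Finset.sum_add_distrib]
    exact Finset.sum_congr rfl fun i _ => Finset.sum_add_distrib
  rw [hsum, ← hbell']
  linarith [key]
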